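/- If h₁ is c₁-averaged and h₂ is c₂-averaged with c₁, c₂ ∈ (0,1), then the composition h₁h₂ is (c₁ + c₂ - c₁c₂)-averaged. -/

import Mathlib

/-- If `h₁` is `c₁`-averaged and `h₂` is `c₂`-averaged, then `h₁ ∘ h₂` is
`(c₁ + c₂ - c₁ * c₂)`-averaged. -/
theorem averaged_comp
    {H : Type*} [NormedAddCommGroup H] [InnerProductSpace ℝ H] [CompleteSpace H]
    (h₁ h₂ : H → H) (c₁ c₂ : ℝ) (hc₁ : c₁ ∈ Set.Ioo (0 : ℝ) 1) (hc₂ : c₂ ∈ Set.Ioo (0 : ℝ) 1)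
    (H₁ : ∃ N : H → H, (∀ x y : H, ‖N x - N y‖ ≤ ‖x - y‖) ∧
      ∀ x : H, h₁ x = (1 - c₁) • x + c₁ • N x)
    (H₂ : ∃ N : H → H, (∀ x y : H, ‖N x - N y‖ ≤ ‖x - y‖) ∧
      ∀ x : H, h₂ x = (1 - c₂) • x + c₂ • N x) :
    ∃ N : H → H, (∀ x y : H, ‖N x - N y‖ ≤ ‖x - y‖) ∧
      ∀ x : H, (h₁ ∘ h₂) x = (1 - (c₁ + c₂ - c₁ * c₂)) • x + (c₁ + c₂ - c₁ * c₂) • N x := by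
  obtain ⟨N₁, hN₁, hh₁⟩ := H₁
  obtain ⟨N₂, hN₂, hh₂⟩ := H₂
  obtain ⟨hc₁0, hc₁1⟩ := hc₁
  obtain ⟨hc₂0, hc₂1⟩ := hc₂
  set c : ℝ := c₁ + c₂ - c₁ * c₂ with hc
  have hcpos : 0 < c := by nlinarith
  set a : ℝ := (1 - c₁) * c₂ / c with ha
  set b : ℝ := c₁ / c with hb
  have hab : a + b = 1 := by
    rw [ha, hb, ← add_div, div_eq_one_iff_eq hcpos.ne', hc]
    ring
  have ha0 : 0 ≤ a := by
    apply div_nonneg _ hcpos.le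
    nlinarith
  have hb0 : 0 ≤ b := div_nonneg hc₁0.le hcpos.le
  -- h₂ is nonexpansive
  have hh₂ne : ∀ x y : H, ‖h₂ x - h₂ y‖ ≤ ‖x - y‖ := by
    intro x y
    rw [hh₂ x, hh₂ y]
    have : (1 - c₂) • x + c₂ • N₂ x - ((1 - c₂) • y + c₂ • N₂ y)
        = (1 - c₂) • (x - y) + c₂ • (N₂ x - N₂ y) := by
      simp [smul_sub]; abel
    rw [this]
    calc ‖(1 - c₂) • (x - y) + c₂ • (N₂ x - N₂ y)‖
        ≤ ‖(1 - c₂) • (x - y)‖ + ‖c₂ • (N₂ x - N₂ y)‖ := norm_add_le _ _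
      _ = (1 - c₂) * ‖x - y‖ + c₂ * ‖N₂ x - N₂ y‖ := by
          rw [norm_smul, norm_smul, Real.norm_eq_abs, Real.norm_eq_abs,
            abs_of_nonneg (by linarith), abs_of_nonneg hc₂0.le]
      _ ≤ (1 - c₂) * ‖x - y‖ + c₂ * ‖x - y‖ := by
          have := hN₂ x y
          nlinarith
      _ = ‖x - y‖ := by ring
  refine ⟨fun x => a • N₂ x + b • N₁ (h₂ x), ?_, ?_⟩
  · intro x y
    have key : a • N₂ x + b • N₁ (h₂ x) - (a • N₂ y + b • N₁ (h₂ y))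
        = a • (N₂ x - N₂ y) + b • (N₁ (h₂ x) - N₁ (h₂ y)) := by
      simp [smul_sub]; abel
    rw [key]
    calc ‖a • (N₂ x - N₂ y) + b • (N₁ (h₂ x) - N₁ (h₂ y))‖
        ≤ a * ‖N₂ x - N₂ y‖ + b * ‖N₁ (h₂ x) - N₁ (h₂ y)‖ := by
          refine le_trans (norm_add_le _ _) ?_
          rw [norm_smul, norm_smul, Real.norm_eq_abs, Real.norm_eq_abs,
            abs_of_nonneg ha0, abs_of_nonneg hb0]
      _ ≤ a * ‖x - y‖ + b * ‖x - y‖ := by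
          have h1 := hN₂ x y
          have h2 := le_trans (hN₁ (h₂ x) (h₂ y)) (hh₂ne x y)
          nlinarith
      _ = ‖x - y‖ := by rw [← add_mul, hab, one_mul]
  · intro x
    have key : c • (a • N₂ x + b • N₁ (h₂ x))
        = ((1 - c₁) * c₂) • N₂ x + c₁ • N₁ (h₂ x) := by
      rw [smul_add, smul_smul, smul_smul, ha, hb, mul_div_cancel₀ _ hcpos.ne',
        mul_div_cancel₀ _ hcpos.ne']
    have h1 : (1 - c) = (1 - c₁) * (1 - c₂) := by rw [hc]; ring
    show h₁ (h₂ x) = (1 - c) • x + c • (a • N₂ x + b • N₁ (h₂ x))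
    rw [key, h1, hh₁, hh₂]
    module
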